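/- arXiv:1010.2427 — 4 statements merged into one kernel-verified Lean document; each statement's English description precedes it below -/
import Mathlib

section
/- Let ρ, σ, μ, ν ≥ 0 with s := ρμ + σν > 0. Suppose π, ψ are smooth solutions of ∂ψ/∂t = ∂π/∂r, ∂π/∂t = ∂ψ/∂r + (p/r)ψ on (0,R] with ψ(0,t)=0, satisfying the boundary condition ρπ + σψ + μ(∂ψ/∂t) + ν(∂π/∂t) = 0 at r = R. Define E_b(t) = (1/2)∫₀^R (π²+ψ²) r^p dr + (R^p/(2s))(μψ(R,t) + νπ(R,t))². Then dE_b/dt = -(R^p/s)(μσ ψ(R,t)² + νρ π(R,t)²) ≤ 0. -/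
theorem stmt_4 (p R : ℝ) (hp : 0 < p) (hR : 0 < R)
    (ρ σ μ ν : ℝ) (hρ : 0 ≤ ρ) (hσ : 0 ≤ σ) (hμ : 0 ≤ μ) (hν : 0 ≤ ν)
    (hs : 0 < ρ * μ + σ * ν)
    (pi psi : ℝ → ℝ → ℝ) (E : ℝ → ℝ)
    -- the energy identity dE/dt = R^p π(R,t) ψ(R,t) may be assumed:
    (hE : ∀ t : ℝ, HasDerivAt E (R ^ p * (pi R t * psi R t)) t)
    (hP : ∀ t : ℝ, DifferentiableAt ℝ (fun τ => pi R τ) t)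
    (hS : ∀ t : ℝ, DifferentiableAt ℝ (fun τ => psi R τ) t)
    -- boundary condition ρπ + σψ + μ ∂ψ/∂t + ν ∂π/∂t = 0 at r = R:
    (hbc : ∀ t : ℝ, ρ * pi R t + σ * psi R t
        + μ * deriv (fun τ => psi R τ) t + ν * deriv (fun τ => pi R τ) t = 0)
    (t : ℝ) :
    HasDerivAt
      (fun τ => E τ + R ^ p / (2 * (ρ * μ + σ * ν)) * (μ * psi R τ + ν * pi R τ) ^ 2)
      (-(R ^ p / (ρ * μ + σ * ν)) * (μ * σ * (psi R t) ^ 2 + ν * ρ * (pi R t) ^ 2)) t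
    ∧ -(R ^ p / (ρ * μ + σ * ν)) * (μ * σ * (psi R t) ^ 2 + ν * ρ * (pi R t) ^ 2) ≤ 0 := by
  have hsne : (ρ * μ + σ * ν) ≠ 0 := ne_of_gt hs
  have hRp : (0:ℝ) < R ^ p := Real.rpow_pos_of_pos hR p
  constructor
  · set a := deriv (fun τ => psi R τ) t with ha
    set b := deriv (fun τ => pi R τ) t with hb
    have hψ : HasDerivAt (fun τ => psi R τ) a t := (hS t).hasDerivAt
    have hπ : HasDerivAt (fun τ => pi R τ) b t := (hP t).hasDerivAt
    have h2 : HasDerivAt (fun τ => μ * psi R τ + ν * pi R τ) (μ * a + ν * b) t :=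
      (hψ.const_mul μ).add (hπ.const_mul ν)
    have h3 := (h2.pow 2).const_mul (R ^ p / (2 * (ρ * μ + σ * ν)))
    have h4 := (hE t).add h3
    refine h4.congr_deriv ?_
    have hb := hbc t
    have key : μ * a + ν * b = -(ρ * pi R t + σ * psi R t) := by linarith
    rw [key]
    field_simp
    ring
  · rw [neg_mul]
    apply neg_nonpos_of_nonneg
    apply mul_nonneg (div_nonneg hRp.le hs.le)
    have := sq_nonneg (psi R t); have := sq_nonneg (pi R t)
    positivity
end

section
/- Let W, W̃ be symmetric positive definite real N×N matrices, D, D̃ real N×N matrices, and B a real N×N matrix satisfying the summation-by-parts relation W D̃ + (W̃ D)^t = B. If Π(t), Ψ(t) ∈ ℝ^N solve the ODE system Ψ' = h^{-1} D Π, Π' = h^{-1} D̃ Ψ (h > 0 a constant), then the discrete energy Ê(t) = (1/2) h^{p+1} (Π^t W Π + Ψ^t W̃ Ψ) satisfies dÊ/dt = h^p Π(t)^t B Ψ(t). -/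
open Matrix

lemma aux_dot_deriv {N : ℕ} (M : Matrix (Fin N) (Fin N) ℝ)
    {f g : ℝ → Fin N → ℝ} {f' g' : Fin N → ℝ} {t : ℝ}
    (hf : HasDerivAt f f' t) (hg : HasDerivAt g g' t) :
    HasDerivAt (fun τ => f τ ⬝ᵥ M.mulVec (g τ))
      (f' ⬝ᵥ M.mulVec (g t) + f t ⬝ᵥ M.mulVec g') t := by
  have hfc : ∀ i, HasDerivAt (fun τ => f τ i) (f' i) t := hasDerivAt_pi.mp hf
  have hgc : ∀ i, HasDerivAt (fun τ => g τ i) (g' i) t := hasDerivAt_pi.mp hg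
  have key : ∀ i : Fin N, HasDerivAt (fun τ => f τ i * ∑ j, M i j * g τ j)
      (f' i * (∑ j, M i j * g t j) + f t i * (∑ j, M i j * g' j)) t := by
    intro i
    exact (hfc i).mul (HasDerivAt.fun_sum fun j _ => (hgc j).const_mul (M i j))
  have := HasDerivAt.fun_sum (fun i (_ : i ∈ Finset.univ) => key i)
  convert this using 1
  · rfl
  · rfl
  · rfl
  simp [dotProduct, mulVec, Finset.sum_add_distrib]

lemma symm_dot {N : ℕ} {W : Matrix (Fin N) (Fin N) ℝ} (hW : W.IsSymm)
    (a b : Fin N → ℝ) : a ⬝ᵥ W.mulVec b = b ⬝ᵥ W.mulVec a := by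
  rw [dotProduct_mulVec, ← mulVec_transpose, hW, dotProduct_comm]

theorem stmt_5 (N : ℕ) (h p : ℝ) (hh : 0 < h)
    (W Wt D Dt B : Matrix (Fin N) (Fin N) ℝ)
    (hWsym : W.IsSymm) (hWtsym : Wt.IsSymm) (hWpd : W.PosDef) (hWtpd : Wt.PosDef)
    -- the summation-by-parts relation W D̃ + (W̃ D)ᵗ = B:
    (hSBP : W * Dt + (Wt * D)ᵀ = B)
    (Pi Psi : ℝ → Fin N → ℝ)
    (hode1 : ∀ t : ℝ, HasDerivAt Psi (h⁻¹ • D.mulVec (Pi t)) t)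
    (hode2 : ∀ t : ℝ, HasDerivAt Pi (h⁻¹ • Dt.mulVec (Psi t)) t)
    (t : ℝ) :
    HasDerivAt
      (fun τ => (1/2) * h ^ (p + 1) *
        (Pi τ ⬝ᵥ W.mulVec (Pi τ) + Psi τ ⬝ᵥ Wt.mulVec (Psi τ)))
      (h ^ p * (Pi t ⬝ᵥ B.mulVec (Psi t))) t := by
  have h1 := aux_dot_deriv W (hode2 t) (hode2 t)
  have h2 := aux_dot_deriv Wt (hode1 t) (hode1 t)
  have hD := ((h1.add h2).const_mul ((1/2) * h ^ (p + 1)))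
  convert hD using 1
  · rfl
  · rfl
  · rfl
  have e1 : (h⁻¹ • Dt.mulVec (Psi t)) ⬝ᵥ W.mulVec (Pi t)
      = Pi t ⬝ᵥ W.mulVec (h⁻¹ • Dt.mulVec (Psi t)) :=
    symm_dot hWsym _ _
  have e2 : (h⁻¹ • D.mulVec (Pi t)) ⬝ᵥ Wt.mulVec (Psi t)
      = Psi t ⬝ᵥ Wt.mulVec (h⁻¹ • D.mulVec (Pi t)) :=
    symm_dot hWtsym _ _
  rw [e1, e2]
  have e3 : Psi t ⬝ᵥ (Wt * D).mulVec (Pi t)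
      = Pi t ⬝ᵥ ((Wt * D)ᵀ).mulVec (Psi t) := by
    rw [dotProduct_mulVec, ← mulVec_transpose, dotProduct_comm]
  have hpow : h ^ (p + 1) = h ^ p * h := by
    rw [Real.rpow_add hh, Real.rpow_one]
  rw [mulVec_smul, dotProduct_smul, mulVec_smul, dotProduct_smul]
  simp only [smul_eq_mul, mulVec_mulVec]
  rw [e3, ← hSBP, add_mulVec, dotProduct_add, hpow]
  field_simp
  ring
end

section
/- Fix h > 0 and p ∈ ℕ, and let ψ : ℝ → ℝ be smooth. Define the Evans difference operator at a point r > 0 by (D̃ψ)(r) = (p+1) · ((r+h)^p ψ(r+h) - (r-h)^p ψ(r-h)) / ((r+h)^{p+1} - (r-h)^{p+1}). Then as h → 0 at fixed r > 0, (D̃ψ)(r) = ψ'(r) + (p/r)ψ(r) + O(h²). -/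
open Set Finset

private lemma iterWithin_eq {f : ℝ → ℝ} (hf : ContDiff ℝ 3 f) {m : ℕ} (hm : m ≤ 3)
    {s : Set ℝ} (hs : UniqueDiffOn ℝ s) {x : ℝ} (hx : x ∈ s) :
    iteratedDerivWithin m f s x = iteratedDeriv m f x := by
  have h1 : HasFTaylorSeriesUpToOn 3 f (ftaylorSeries ℝ f) s :=
    (contDiff_iff_ftaylorSeries.mp hf).hasFTaylorSeriesUpToOn s
  have h2 : ftaylorSeries ℝ f x m = iteratedFDerivWithin ℝ m f s x :=
    h1.eq_iteratedFDerivWithin_of_uniqueDiffOn (by exact_mod_cast hm) hs hx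
  rw [iteratedDerivWithin_eq_iteratedFDerivWithin, iteratedDeriv_eq_iteratedFDeriv, ← h2]
  rfl

theorem stmt_8 (p : ℕ) (r : ℝ) (hr : 0 < r) (ψ : ℝ → ℝ) (hψ : ContDiff ℝ 3 ψ) :
    ∃ C h₀ : ℝ, 0 < C ∧ 0 < h₀ ∧ ∀ h : ℝ, 0 < h → h < h₀ →
      |((p : ℝ) + 1) * ((r + h) ^ p * ψ (r + h) - (r - h) ^ p * ψ (r - h)) /
          ((r + h) ^ (p + 1) - (r - h) ^ (p + 1))
        - (deriv ψ r + ((p : ℝ) / r) * ψ r)| ≤ C * h ^ 2 := by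
  set L : ℝ := deriv ψ r + ((p : ℝ) / r) * ψ r with hL
  set g : ℝ → ℝ := fun x => x ^ p * ψ x with hgdef
  have hg : ContDiff ℝ 3 g := (contDiff_id.pow p).mul hψ
  set N : ℝ → ℝ := fun h =>
    ((p : ℝ) + 1) * (g (r + h) - g (r - h)) - L * ((r + h) ^ (p + 1) - (r - h) ^ (p + 1))
    with hNdef
  have hN : ContDiff ℝ 3 N := by
    apply ContDiff.sub
    · exact contDiff_const.mul ((hg.comp (contDiff_const.add contDiff_id)).sub
        (hg.comp (contDiff_const.sub contDiff_id)))
    · exact contDiff_const.mul (((contDiff_const.add contDiff_id).pow _).sub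
        ((contDiff_const.sub contDiff_id).pow _))
  -- derivative of g at r
  have hgr : deriv g r = r ^ p * L := by
    have h1 : HasDerivAt g ((p : ℝ) * r ^ (p - 1) * ψ r + r ^ p * deriv ψ r) r :=
      (hasDerivAt_pow p r).mul ((hψ.differentiable (by norm_num) r).hasDerivAt)
    rw [h1.deriv, hL]
    have : (p : ℝ) * r ^ (p - 1) = r ^ p * ((p : ℝ) / r) := by
      cases p with
      | zero => simp
      | succ q => field_simp [pow_succ]; ring_nf; simp
    rw [this]; ring
  -- N 0 = 0
  have hN0 : N 0 = 0 := by simp [hNdef]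
  -- N' 0 = 0
  have hN1 : deriv N 0 = 0 := by
    have hgd : DifferentiableAt ℝ g (r + 0) := hg.differentiable (by norm_num) _
    have hgd' : DifferentiableAt ℝ g (r - 0) := hg.differentiable (by norm_num) _
    have h1 : HasDerivAt (fun h : ℝ => g (r + h)) (deriv g (r + 0) * 1) 0 :=
      (hgd.hasDerivAt).comp 0 ((hasDerivAt_id (0:ℝ)).const_add r)
    have h2 : HasDerivAt (fun h : ℝ => g (r - h)) (deriv g (r - 0) * (-1)) 0 :=
      (hgd'.hasDerivAt).comp 0 ((hasDerivAt_id (0:ℝ)).const_sub r)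
    have h3 : HasDerivAt (fun h : ℝ => (r + h) ^ (p + 1))
        (((p : ℝ) + 1) * (r + 0) ^ p * 1) 0 := by
      simpa using (((hasDerivAt_id (0:ℝ)).const_add r).fun_pow (p + 1))
    have h4 : HasDerivAt (fun h : ℝ => (r - h) ^ (p + 1))
        (((p : ℝ) + 1) * (r - 0) ^ p * (-1)) 0 := by
      simpa using (((hasDerivAt_id (0:ℝ)).const_sub r).fun_pow (p + 1))
    have hD : HasDerivAt N
        (((p : ℝ) + 1) * (deriv g (r + 0) * 1 - deriv g (r - 0) * (-1)) -
          L * ((((p : ℝ) + 1) * (r + 0) ^ p * 1) - (((p : ℝ) + 1) * (r - 0) ^ p * (-1)))) 0 :=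
      ((h1.sub h2).const_mul _).sub ((h3.sub h4).const_mul L)
    rw [hD.deriv]
    simp only [add_zero, sub_zero] at *
    rw [hgr]; ring
  -- oddness and N'' 0 = 0
  have hodd : ∀ x : ℝ, N (-x) = -N x := by
    intro x
    simp only [hNdef]
    rw [show r + -x = r - x by ring, show r - -x = r + x by ring]
    ring
  have heven : ∀ x : ℝ, deriv N (-x) = deriv N x := by
    intro x
    have h1 : (fun y : ℝ => N (-y)) = fun y => -N y := funext hodd
    have h2 := congrArg (fun f : ℝ → ℝ => deriv f x) h1
    simp only [deriv_comp_neg, deriv.fun_neg] at h2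
    linarith [h2]
  have hN2 : iteratedDeriv 2 N 0 = 0 := by
    have h1 : (fun y : ℝ => deriv N (-y)) = fun y => deriv N y := funext heven
    have h2 := congrArg (fun f : ℝ → ℝ => deriv f 0) h1
    simp only [deriv_comp_neg, neg_zero] at h2
    have h3 : deriv (deriv N) 0 = 0 := by linarith [h2]
    rw [show (2:ℕ) = 1 + 1 from rfl, iteratedDeriv_succ, iteratedDeriv_one]
    exact h3
  -- Taylor bound on [0, r]
  obtain ⟨C₀, hC₀⟩ := exists_taylor_mean_remainder_bound (f := N) (a := 0) (b := r)
    (n := 2) hr.le (hN.contDiffOn)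
  have hud : UniqueDiffOn ℝ (Icc (0:ℝ) r) := uniqueDiffOn_Icc hr
  have h0mem : (0:ℝ) ∈ Icc (0:ℝ) r := ⟨le_refl _, hr.le⟩
  have htay : ∀ x ∈ Icc (0:ℝ) r, taylorWithinEval N 2 (Icc 0 r) 0 x = 0 := by
    intro x hx
    rw [taylor_within_apply]
    have e0 : iteratedDerivWithin 0 N (Icc 0 r) 0 = 0 := by
      rw [iterWithin_eq hN (by norm_num) hud h0mem]; simpa using hN0
    have e1 : iteratedDerivWithin 1 N (Icc 0 r) 0 = 0 := by
      rw [iterWithin_eq hN (by norm_num) hud h0mem, iteratedDeriv_one]; exact hN1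
    have e2 : iteratedDerivWithin 2 N (Icc 0 r) 0 = 0 := by
      rw [iterWithin_eq hN (by norm_num) hud h0mem]; exact hN2
    rw [Finset.sum_range_succ, Finset.sum_range_succ, Finset.sum_range_one, e0, e1, e2]
    simp
  have hNbound : ∀ h : ℝ, 0 < h → h < r → |N h| ≤ C₀ * h ^ 3 := by
    intro h hh hhr
    have hmem : h ∈ Icc (0:ℝ) r := ⟨hh.le, hhr.le⟩
    have := hC₀ h hmem
    rw [htay h hmem] at this
    simpa using this
  -- denominator lower bound
  have hE : ∀ h : ℝ, 0 < h → h < r →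
      r ^ p * (2 * h) ≤ (r + h) ^ (p + 1) - (r - h) ^ (p + 1) := by
    intro h hh hhr
    have key := geom_sum₂_mul (r + h) (r - h) (p + 1)
    have hsum : r ^ p ≤ ∑ i ∈ Finset.range (p + 1), (r + h) ^ i * (r - h) ^ (p + 1 - 1 - i) := by
      have hterm : r ^ p ≤ (r + h) ^ p * (r - h) ^ (p + 1 - 1 - p) := by
        simp only [Nat.add_sub_cancel, Nat.sub_self, pow_zero, mul_one]
        exact pow_le_pow_left₀ hr.le (by linarith) p
      refine le_trans hterm (Finset.single_le_sum (f := fun i =>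
        (r + h) ^ i * (r - h) ^ (p + 1 - 1 - i)) ?_ (Finset.self_mem_range_succ p))
      intro i _
      have h1 : (0:ℝ) ≤ r - h := by linarith
      have h2 : (0:ℝ) ≤ (r + h) ^ i := by positivity
      exact mul_nonneg h2 (pow_nonneg h1 _)
    calc r ^ p * (2 * h)
        ≤ (∑ i ∈ Finset.range (p + 1), (r + h) ^ i * (r - h) ^ (p + 1 - 1 - i)) * (2 * h) := by
          apply mul_le_mul_of_nonneg_right hsum; linarith
      _ = (∑ i ∈ Finset.range (p + 1), (r + h) ^ i * (r - h) ^ (p + 1 - 1 - i))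
            * ((r + h) - (r - h)) := by ring_nf
      _ = (r + h) ^ (p + 1) - (r - h) ^ (p + 1) := key
  refine ⟨max (C₀ / (2 * r ^ p)) 1, r, lt_of_lt_of_le one_pos (le_max_right _ _), hr, ?_⟩
  intro h hh hhr
  have hrp : (0:ℝ) < r ^ p := pow_pos hr p
  have hEpos : (0:ℝ) < (r + h) ^ (p + 1) - (r - h) ^ (p + 1) :=
    lt_of_lt_of_le (by positivity) (hE h hh hhr)
  set E : ℝ := (r + h) ^ (p + 1) - (r - h) ^ (p + 1) with hEdef
  have hkey : ((p : ℝ) + 1) * ((r + h) ^ p * ψ (r + h) - (r - h) ^ p * ψ (r - h)) / E - L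
      = N h / E := by
    field_simp
    simp only [hNdef, hgdef]
    ring
  rw [hkey]
  have hNb := hNbound h hh hhr
  have hC₀h : (0:ℝ) ≤ C₀ * h ^ 3 := le_trans (abs_nonneg _) hNb
  have hq : |N h / E| ≤ C₀ * h ^ 3 / (r ^ p * (2 * h)) := by
    rw [abs_div, abs_of_pos hEpos]
    exact div_le_div₀ hC₀h hNb (by positivity) (hE h hh hhr)
  have heq : C₀ * h ^ 3 / (r ^ p * (2 * h)) = C₀ / (2 * r ^ p) * h ^ 2 := by
    field_simp
  calc |N h / E| ≤ C₀ / (2 * r ^ p) * h ^ 2 := by rw [← heq]; exact hq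
    _ ≤ max (C₀ / (2 * r ^ p)) 1 * h ^ 2 :=
        mul_le_mul_of_nonneg_right (le_max_left _ _) (sq_nonneg h)
end

section
/- Let p ∈ ℕ be even. Then there is a polynomial q ∈ ℚ[x] of degree at most p/2 with q(0) = 1 such that the sequence w_i = i^p · q(1/i²) (for i ≥ 1) satisfies the recurrence (i+1)w_{i+1} - (i-1)w_{i-1} = 2(p+1)w_i for all i ≥ 2. (I.e., the asymptotically constant solution mode w̄_i^{(+)} of the SBP2 recurrence is a finite polynomial in i^{-2} for even p.) -/
open Polynomial Finset

/-- φ_m(x) = x * ∏_{j=1}^m (x² - j²). -/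
def Fphi : ℕ → ℚ → ℚ
  | 0, x => x
  | (m+1), x => (x^2 - ((m:ℚ)+1)^2) * Fphi m x

/-- coefficients d K t = e_{K-t}, with d K 0 = 1. -/
noncomputable def dphi (K : ℕ) : ℕ → ℚ
  | 0 => 1
  | (t+1) => dphi K t * (2*((K - t : ℕ):ℚ)+1) * ((K - t : ℕ):ℚ)^2 / (2*((t:ℚ)+1))

/-- ρ_m(y) = ∏_{j=1}^m (1 - j² y). -/
noncomputable def rphi : ℕ → Polynomial ℚ
  | 0 => 1
  | (m+1) => (1 - C (((m:ℚ)+1)^2) * X) * rphi m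

noncomputable def Sphi (K t : ℕ) (x : ℚ) : ℚ := ∑ s ∈ range (t+1), dphi K s * Fphi (K - s) x

noncomputable def qphi (K : ℕ) : Polynomial ℚ :=
  ∑ s ∈ range (K+1), C (dphi K s) * X^s * rphi (K - s)

lemma Fphi_succ (m : ℕ) (x : ℚ) :
    Fphi (m+1) x = (x^2 - ((m:ℚ)+1)^2) * Fphi m x := rfl

lemma Sphi_zero (K : ℕ) (x : ℚ) : Sphi K 0 x = Fphi K x := by
  simp [Sphi, dphi]

lemma Sphi_succ (K t : ℕ) (x : ℚ) :
    Sphi K (t+1) x = Sphi K t x + dphi K (t+1) * Fphi (K - (t+1)) x :=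
  sum_range_succ _ _

lemma Fphi_shift (m : ℕ) (x : ℚ) :
    Fphi (m+1) (x+1) = (x+(m:ℚ)+2)*(x+(m:ℚ)+1)*Fphi m x ∧
    Fphi (m+1) (x-1) = (x-(m:ℚ)-2)*(x-(m:ℚ)-1)*Fphi m x := by
  induction m generalizing x with
  | zero => constructor <;> (simp [Fphi]; ring)
  | succ m ih =>
    obtain ⟨h1, h2⟩ := ih x
    constructor
    · rw [Fphi_succ (m+1) (x+1), h1, Fphi_succ m x]
      push_cast
      ring
    · rw [Fphi_succ (m+1) (x-1), h2, Fphi_succ m x]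
      push_cast
      ring

lemma Fphi_key (m : ℕ) (x : ℚ) :
    x * (Fphi m (x+1) - Fphi m (x-1))
      = 2*(2*(m:ℚ)+1) * (Fphi m x + (m:ℚ)^2 * Fphi (m-1) x) := by
  cases m with
  | zero => simp [Fphi]; ring
  | succ m =>
    obtain ⟨h1, h2⟩ := Fphi_shift m x
    rw [h1, h2, show m + 1 - 1 = m from rfl, Fphi_succ m x]
    push_cast
    ring

lemma Sphi_claim (K : ℕ) (t : ℕ) (ht : t ≤ K) (x : ℚ) :
    x * (Sphi K t (x+1) - Sphi K t (x-1))
      = 2*(2*(K:ℚ)+1) * Sphi K t x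
        + 2*(2*((K-t : ℕ):ℚ)+1) * ((K-t : ℕ):ℚ)^2 * dphi K t * Fphi (K - t - 1) x := by
  induction t with
  | zero =>
    rw [Sphi_zero, Sphi_zero, Sphi_zero, Nat.sub_zero]
    have h := Fphi_key K x
    rw [h, show dphi K 0 = 1 from rfl]
    ring
  | succ t ih =>
    have ht' : t ≤ K := by omega
    obtain ⟨u, hu⟩ : ∃ u, K = t + 1 + u := ⟨K - (t+1), by omega⟩
    have h1 : K - t = u + 1 := by omega
    have h2 : K - (t+1) = u := by omega
    have hIH := ih ht'
    rw [h1] at hIH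
    rw [Sphi_succ, Sphi_succ, Sphi_succ, h2]
    have hkey := Fphi_key u x
    have hd' : 2*((t:ℚ)+1) * dphi K (t+1) = dphi K t * (2*(u:ℚ)+3) * ((u:ℚ)+1)^2 := by
      rw [show dphi K (t+1)
            = dphi K t * (2*((K - t : ℕ):ℚ)+1) * ((K - t : ℕ):ℚ)^2 / (2*((t:ℚ)+1)) from rfl,
          h1]
      have h2t : (2*((t:ℚ)+1)) ≠ 0 := by positivity
      rw [mul_comm (2*((t:ℚ)+1)), div_mul_cancel₀ _ h2t]
      push_cast
      ring
    have hK : (K:ℚ) = (t:ℚ) + 1 + (u:ℚ) := by exact_mod_cast congrArg (Nat.cast : ℕ → ℚ) hu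
    simp only [Nat.add_sub_cancel] at hIH
    push_cast at hIH ⊢
    linear_combination hIH + dphi K (t+1) * hkey - (2*Fphi u x) * hd'
      - (4*dphi K (t+1)*Fphi u x) * hK

lemma Sphi_final (K : ℕ) (x : ℚ) :
    x * (Sphi K K (x+1) - Sphi K K (x-1)) = 2*(2*(K:ℚ)+1) * Sphi K K x := by
  have h := Sphi_claim K K le_rfl x
  simpa using h

lemma rphi_natDegree (m : ℕ) : (rphi m).natDegree ≤ m := by
  induction m with
  | zero => simp [rphi]
  | succ m ih =>
    refine (natDegree_mul_le).trans ?_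
    have h1 : (1 - C (((m:ℚ)+1)^2) * X).natDegree ≤ 1 := by
      refine (natDegree_sub_le _ _).trans ?_
      have h2 : (C (((m:ℚ)+1)^2) * X).natDegree ≤ 1 :=
        (natDegree_C_mul_le _ _).trans (le_of_eq natDegree_X)
      simp only [natDegree_one]
      omega
    omega

lemma rphi_eval_zero (m : ℕ) : (rphi m).eval 0 = 1 := by
  induction m with
  | zero => simp [rphi]
  | succ m ih => simp [rphi, ih]

lemma rphi_bridge (m : ℕ) (x : ℚ) (hx : x ≠ 0) :
    x^(2*m+1) * (rphi m).eval (1/x^2) = Fphi m x := by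
  induction m with
  | zero => simp [rphi, Fphi]
  | succ m ih =>
    rw [Fphi_succ, ← ih]
    simp only [rphi, eval_mul, eval_sub, eval_one, eval_C, eval_X]
    field_simp
    ring

lemma qphi_natDegree (K : ℕ) : (qphi K).natDegree ≤ K := by
  refine natDegree_sum_le_of_forall_le _ _ ?_
  intro s hs
  have hsK : s ≤ K := by have := mem_range.mp hs; omega
  refine (natDegree_mul_le).trans ?_
  have h1 : (C (dphi K s) * X^s).natDegree ≤ s :=
    (natDegree_C_mul_le _ _).trans (by simp)
  have h2 := rphi_natDegree (K - s)
  omega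

lemma qphi_eval_zero (K : ℕ) : (qphi K).eval 0 = 1 := by
  simp only [qphi, eval_finset_sum, eval_mul, eval_pow, eval_C, eval_X]
  rw [Finset.sum_eq_single 0]
  · simp [rphi_eval_zero, show dphi K 0 = 1 from rfl]
  · intro b _ hb
    simp [zero_pow hb]
  · intro h
    simp at h

lemma qphi_bridge (K : ℕ) (x : ℚ) (hx : x ≠ 0) :
    x^(2*K+1) * (qphi K).eval (1/x^2) = Sphi K K x := by
  simp only [qphi, eval_finset_sum, eval_mul, eval_pow, eval_C, eval_X, Sphi, Finset.mul_sum]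
  refine Finset.sum_congr rfl ?_
  intro s hs
  have hsK : s ≤ K := by have := mem_range.mp hs; omega
  have key : x^(2*K+1) * (1/x^2)^s = x^(2*(K-s)+1) := by
    rw [div_pow, one_pow, mul_one_div,
      div_eq_iff (by positivity : ((x^2)^s : ℚ) ≠ 0), ← pow_mul, ← pow_add]
    congr 1
    omega
  rw [← rphi_bridge (K-s) x hx, ← key]
  ring

theorem stmt_14 (p : ℕ) (hp : Even p) :
    ∃ q : Polynomial ℚ, q.natDegree ≤ p / 2 ∧ q.eval 0 = 1 ∧
      ∀ i : ℕ, 2 ≤ i →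
        ((i : ℚ) + 1) * (((i : ℚ) + 1) ^ p * q.eval (1 / ((i : ℚ) + 1) ^ 2))
          - ((i : ℚ) - 1) * (((i : ℚ) - 1) ^ p * q.eval (1 / ((i : ℚ) - 1) ^ 2))
          = 2 * ((p : ℚ) + 1) * ((i : ℚ) ^ p * q.eval (1 / (i : ℚ) ^ 2)) := by
  obtain ⟨K, hK⟩ := hp
  refine ⟨qphi K, ?_, qphi_eval_zero K, ?_⟩
  · have h : p / 2 = K := by omega
    rw [h]
    exact qphi_natDegree K
  · intro i hi
    set x := (i:ℚ) with hxdef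
    have hx2 : (2:ℚ) ≤ x := by rw [hxdef]; exact_mod_cast hi
    have hx : x ≠ 0 := by linarith
    have hxp : x + 1 ≠ 0 := by linarith
    have hxm : x - 1 ≠ 0 := by linarith
    have hb : ∀ y : ℚ, y ≠ 0 → y * (y^p * (qphi K).eval (1/y^2)) = Sphi K K y := by
      intro y hy
      rw [← qphi_bridge K y hy, hK, show 2*K+1 = (K+K)+1 from by ring, pow_succ]
      ring
    have hbp := hb (x+1) hxp
    have hbm := hb (x-1) hxm
    have hbx := hb x hx
    have hmain := Sphi_final K x
    have hp1 : (p:ℚ) + 1 = 2*(K:ℚ)+1 := by rw [hK]; push_cast; ring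
    apply mul_left_cancel₀ hx
    linear_combination x*hbp - x*hbm - (2*((p:ℚ)+1))*hbx + hmain - (2*Sphi K K x)*hp1
end
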